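/- (Misère Nim) Let a₁, ..., a_k be natural numbers and let G = *a₁ + ... + *a_k be the disjunctive sum of the corresponding Nim-heaps. If some a_i ≥ 2, then G is a misère P-position if and only if a₁ ⊕ a₂ ⊕ ... ⊕ a_k = 0. If instead every a_i is 0 or 1, then G is a misère P-position if and only if a₁ ⊕ a₂ ⊕ ... ⊕ a_k = 1. -/

import Mathlib

universe u

namespace SetTheory

/-- Combinatorial pre-games (removed from Mathlib; reinstated with the old definition). -/
inductive PGame : Type (u + 1)
  | mk : ∀ α β : Type u, (α → PGame) → (β → PGame) → PGame

namespace PGame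

instance : Zero PGame.{u} :=
  ⟨⟨PEmpty, PEmpty, PEmpty.elim, PEmpty.elim⟩⟩

noncomputable instance : Add PGame.{u} :=
  ⟨fun x y => by
    induction x generalizing y with | mk xl xr _ _ IHxl IHxr => _
    induction y with | mk yl yr yL yR IHyl IHyr => _
    have y := mk yl yr yL yR
    refine ⟨xl ⊕ yl, xr ⊕ yr, Sum.rec ?_ ?_, Sum.rec ?_ ?_⟩
    · exact fun i => IHxl i y
    · exact IHyl
    · exact fun i => IHxr i y
    · exact IHyr⟩

noncomputable def nim (o : Ordinal.{u}) : PGame.{u} :=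
  ⟨o.ToType, o.ToType,
    fun x => nim (Ordinal.typein (α := o.ToType) (· < ·) x),
    fun x => nim (Ordinal.typein (α := o.ToType) (· < ·) x)⟩
termination_by o
decreasing_by all_goals exact Ordinal.typein_lt_self x

end PGame

end SetTheory

open SetTheory PGame

/-- `G` is a misère P-position: `G` has at least one option and every option of `G` is a
misère N-position (i.e. not a misère P-position).  In particular the empty game `0` is a
misère N-position.  (For an impartial game the options are the left moves.) -/
def MisereP : PGame → Prop
  | PGame.mk l _ L _ => Nonempty l ∧ ∀ i, ¬ MisereP (L i)

/-- The disjunctive sum of Nim-heaps `*a₁ + ⋯ + *a_k` for a list `[a₁, …, a_k]`. -/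
noncomputable def nimHeapSum : List ℕ → PGame.{0}
  | [] => 0
  | a :: L => nim (a : Ordinal) + nimHeapSum L

namespace SetTheory.PGame

def LeftMoves : PGame.{u} → Type u
  | mk l _ _ _ => l

def moveLeft : (x : PGame.{u}) → LeftMoves x → PGame.{u}
  | mk _ _ L _ => L

lemma moveLeft_add_cases (x y : PGame.{u}) (i : LeftMoves (x + y)) :
    (∃ j, moveLeft (x + y) i = moveLeft x j + y) ∨ (∃ j, moveLeft (x + y) i = x + moveLeft y j) := by
  cases x; cases y
  rcases i with j | j
  · exact Or.inl ⟨j, rfl⟩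
  · exact Or.inr ⟨j, rfl⟩

lemma exists_moveLeft_add_left (x y : PGame.{u}) (j : LeftMoves x) :
    ∃ i, moveLeft (x + y) i = moveLeft x j + y := by
  cases x; cases y
  exact ⟨Sum.inl j, rfl⟩

lemma exists_moveLeft_add_right (x y : PGame.{u}) (j : LeftMoves y) :
    ∃ i, moveLeft (x + y) i = x + moveLeft y j := by
  cases x; cases y
  exact ⟨Sum.inr j, rfl⟩

lemma moveLeft_nim_exists (o : Ordinal.{u}) (i : LeftMoves (nim o)) :
    ∃ b < o, moveLeft (nim o) i = nim b := by
  revert i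
  rw [nim]
  intro i
  exact ⟨_, Ordinal.typein_lt_self i, rfl⟩

lemma exists_moveLeft_nim (o b : Ordinal.{u}) (hb : b < o) :
    ∃ i, moveLeft (nim o) i = nim b := by
  rw [nim]
  refine ⟨Ordinal.ToType.mk ⟨b, hb⟩, ?_⟩
  show nim (Ordinal.typein (α := o.ToType) (· < ·) (Ordinal.ToType.mk ⟨b, hb⟩)) = nim b
  congr 1
  exact congrArg Subtype.val (Ordinal.ToType.mk.symm_apply_apply ⟨b, hb⟩)

end SetTheory.PGame

lemma misereP_iff (G : PGame) :
    MisereP G ↔ Nonempty G.LeftMoves ∧ ∀ i, ¬ MisereP (G.moveLeft i) := by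
  cases G; exact Iff.rfl

-- XOR of a list
def xr (L : List ℕ) : ℕ := L.foldr (fun a r => a ^^^ r) 0

lemma xr_nil : xr [] = 0 := rfl
lemma xr_cons (a : ℕ) (L : List ℕ) : xr (a :: L) = a ^^^ xr L := rfl

lemma xr_set (L : List ℕ) (j b : ℕ) (h : j < L.length) :
    xr (L.set j b) = xr L ^^^ L[j] ^^^ b := by
  induction L generalizing j with
  | nil => simp at h
  | cons a L IH =>
    cases j with
    | zero =>
      simp [xr_cons, Nat.xor_assoc, Nat.xor_comm, Nat.xor_xor_cancel_left]
    | succ j =>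
      simp only [List.set_cons_succ, xr_cons, List.getElem_cons_succ]
      rw [IH _ (by simpa using h)]
      rw [Nat.xor_assoc, Nat.xor_assoc]
      exact (Nat.xor_assoc _ _ _).symm


lemma xr_le_one {L : List ℕ} (h : ∀ a ∈ L, a ≤ 1) : xr L ≤ 1 := by
  induction L with
  | nil => simp [xr_nil]
  | cons a L IH =>
    have ha : a ≤ 1 := h a (by simp)
    have hL : xr L ≤ 1 := IH fun b hb => h b (by simp [hb])
    rw [xr_cons]
    interval_cases a <;> interval_cases h' : xr L <;> simp_all

lemma testBit_xr {L : List ℕ} {k : ℕ} (h : (xr L).testBit k = true) :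
    ∃ a ∈ L, a.testBit k = true := by
  induction L with
  | nil => simp [xr_nil] at h
  | cons a L IH =>
    rw [xr_cons, Nat.testBit_xor] at h
    by_cases ha : a.testBit k = true
    · exact ⟨a, by simp, ha⟩
    · have : (xr L).testBit k = true := by
        cases hb : (xr L).testBit k <;> cases ha' : a.testBit k <;> simp_all
      obtain ⟨c, hc, hc'⟩ := IH this
      exact ⟨c, by simp [hc], hc'⟩

lemma sum_set_lt {L : List ℕ} {j b : ℕ} (h : j < L.length) (hb : b < L[j]) :
    (L.set j b).sum < L.sum := by
  induction L generalizing j with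
  | nil => simp at h
  | cons a L IH =>
    cases j with
    | zero =>
      simp only [List.set_cons_zero, List.sum_cons]
      exact Nat.add_lt_add_right (by simpa using hb) L.sum
    | succ j =>
      simp only [List.set_cons_succ, List.sum_cons]
      exact Nat.add_lt_add_left (IH (by simpa using h) (by simpa using hb)) _

lemma nimHeapSum_nil : nimHeapSum [] = 0 := rfl
lemma nimHeapSum_cons (a : ℕ) (L : List ℕ) :
    nimHeapSum (a :: L) = nim (a : Ordinal) + nimHeapSum L := rfl

lemma moveLeft_nimHeapSum : ∀ (L : List ℕ) (i : (nimHeapSum L).LeftMoves),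
    ∃ j b, ∃ h : j < L.length, b < L[j] ∧
      (nimHeapSum L).moveLeft i = nimHeapSum (L.set j b) := by
  intro L
  induction L with
  | nil =>
    intro i
    rw [nimHeapSum_nil] at i
    exact PEmpty.elim i
  | cons a L IH =>
    rw [nimHeapSum_cons]
    intro i
    rcases moveLeft_add_cases _ _ i with ⟨i', hi'⟩ | ⟨i', hi'⟩
    · obtain ⟨o, ho, he'⟩ := moveLeft_nim_exists _ i'
      obtain ⟨b, hb⟩ := Ordinal.lt_omega0.1 (ho.trans (Ordinal.nat_lt_omega0 a))
      have hba : b < a := by rw [hb] at ho; exact_mod_cast ho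
      refine ⟨0, b, by simp, by simpa using hba, ?_⟩
      rw [hi', he', hb]
      simp [nimHeapSum_cons]
    · obtain ⟨j, b, h, hb, he⟩ := IH i'
      refine ⟨j + 1, b, by simpa using Nat.succ_lt_succ h, by simpa using hb, ?_⟩
      rw [hi', he]
      simp [nimHeapSum_cons]

lemma exists_moveLeft_nimHeapSum : ∀ (L : List ℕ) (j b : ℕ) (h : j < L.length), b < L[j] →
    ∃ i, (nimHeapSum L).moveLeft i = nimHeapSum (L.set j b) := by
  intro L
  induction L with
  | nil => intro j b h; simp at h
  | cons a L IH =>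
    intro j b h hb
    rw [nimHeapSum_cons]
    cases j with
    | zero =>
      have hba : (b : Ordinal) < (a : Ordinal) := by
        have : b < a := by simpa using hb
        exact_mod_cast this
      obtain ⟨i', hi'⟩ := exists_moveLeft_nim (a : Ordinal) (b : Ordinal) hba
      obtain ⟨i, hi⟩ := exists_moveLeft_add_left _ (nimHeapSum L) i'
      refine ⟨i, ?_⟩
      rw [hi, hi']
      simp [nimHeapSum_cons]
    | succ j =>
      obtain ⟨i, hi⟩ := IH j b (by simpa using h) (by simpa using hb)
      obtain ⟨i', hi'⟩ := exists_moveLeft_add_right (nim (a : Ordinal)) _ i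
      exact ⟨i',
        by rw [hi', hi]; simp [nimHeapSum_cons]⟩

lemma nonempty_leftMoves_nimHeapSum {L : List ℕ} :
    Nonempty (nimHeapSum L).LeftMoves ↔ ∃ a ∈ L, 0 < a := by
  constructor
  · rintro ⟨i⟩
    obtain ⟨j, b, h, hb, -⟩ := moveLeft_nimHeapSum L i
    exact ⟨L[j], List.getElem_mem _, by omega⟩
  · rintro ⟨a, ha, hpos⟩
    obtain ⟨j, h, rfl⟩ := List.mem_iff_getElem.1 ha
    obtain ⟨i, -⟩ := exists_moveLeft_nimHeapSum L j 0 h hpos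
    exact ⟨i⟩

lemma exists_lt_xor {L : List ℕ} (hs : xr L ≠ 0) :
    ∃ j, ∃ h : j < L.length, L[j] ^^^ xr L < L[j] := by
  obtain ⟨i, hi, hi'⟩ := Nat.exists_most_significant_bit hs
  obtain ⟨a, haL, ha⟩ := testBit_xr hi
  obtain ⟨j, hj, rfl⟩ := List.mem_iff_getElem.1 haL
  refine ⟨j, hj, Nat.lt_of_testBit i ?_ ha fun m hm => ?_⟩
  · rw [Nat.testBit_xor, ha, hi]; rfl
  · rw [Nat.testBit_xor, hi' m hm, Bool.xor_false]

/-- The misère-Nim winning condition on a list of heap sizes. -/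
def mCond (L : List ℕ) : Prop := if ∀ a ∈ L, a ≤ 1 then xr L = 1 else xr L = 0

lemma combinatorial (L : List ℕ) :
    ((∃ a ∈ L, 0 < a) ∧ ∀ j b, ∀ h : j < L.length, b < L[j] → ¬ mCond (L.set j b)) ↔
      mCond L := by
  by_cases h1 : ∀ a ∈ L, a ≤ 1
  · have hc : mCond L ↔ xr L = 1 := by simp only [mCond, if_pos h1]
    rw [hc]
    constructor
    · rintro ⟨⟨a, ha, hpos⟩, hmv⟩
      obtain ⟨j, hj, rfl⟩ := List.mem_iff_getElem.1 ha
      by_contra hx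
      have hx0 : xr L = 0 := by have := xr_le_one h1; omega
      apply hmv j 0 hj hpos
      have hset1 : ∀ c ∈ L.set j 0, c ≤ 1 := by
        intro c hc
        rcases List.mem_or_eq_of_mem_set hc with h' | h'
        · exact h1 c h'
        · omega
      have hLj : L[j] = 1 := by have := h1 _ (List.getElem_mem hj); omega
      have : xr (L.set j 0) = 1 := by
        rw [xr_set L j 0 hj, hx0, hLj]
        decide
      simp only [mCond, if_pos hset1]
      exact this
    · intro hx
      constructor
      · obtain ⟨a, ha, ha'⟩ := testBit_xr (L := L) (k := 0) (by rw [hx]; rfl)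
        refine ⟨a, ha, ?_⟩
        rcases Nat.eq_zero_or_pos a with rfl | h
        · simp at ha'
        · exact h
      · intro j b h hb hcond
        have hj1 : L[j] ≤ 1 := h1 _ (List.getElem_mem h)
        have hb0 : b = 0 := by omega
        have hLj : L[j] = 1 := by omega
        have hset1 : ∀ c ∈ L.set j b, c ≤ 1 := by
          intro c hc
          rcases List.mem_or_eq_of_mem_set hc with h' | h'
          · exact h1 c h'
          · omega
        have : xr (L.set j b) = 1 := by simpa only [mCond, if_pos hset1] using hcond
        rw [xr_set L j b h, hx, hLj, hb0] at this
        exact absurd this (by decide)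
  · have hc : mCond L ↔ xr L = 0 := by simp only [mCond, if_neg h1]
    have h1' : ∃ a ∈ L, 2 ≤ a := by
      push_neg at h1
      obtain ⟨a, ha, ha'⟩ := h1
      exact ⟨a, ha, by omega⟩
    obtain ⟨a0, ha0L, ha0⟩ := h1'
    obtain ⟨j0, hj0, hjv⟩ := List.mem_iff_getElem.1 ha0L
    rw [hc]
    constructor
    · rintro ⟨-, hmv⟩
      by_contra hx
      by_cases h2 : ∃ j1, ∃ h : j1 < L.length, j1 ≠ j0 ∧ 2 ≤ L[j1]
      · obtain ⟨j, hj, hlt⟩ := exists_lt_xor hx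
        apply hmv j (L[j] ^^^ xr L) hj hlt
        have hxr0 : xr (L.set j (L[j] ^^^ xr L)) = 0 := by
          rw [xr_set L j _ hj, Nat.xor_assoc, Nat.xor_xor_cancel_left, Nat.xor_self]
        obtain ⟨j', hj', hne', h2'⟩ : ∃ j', ∃ h : j' < L.length, j' ≠ j ∧ 2 ≤ L[j'] := by
          rcases h2 with ⟨j1, hj1, hne, h2b⟩
          by_cases e : j = j0
          · exact ⟨j1, hj1, by omega, h2b⟩
          · exact ⟨j0, hj0, fun hh => e hh.symm, by omega⟩
        have hnall : ¬ ∀ c ∈ L.set j (L[j] ^^^ xr L), c ≤ 1 := by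
          intro hall
          have he : (L.set j (L[j] ^^^ xr L))[j']'(by simpa using hj') = L[j'] :=
            List.getElem_set_ne (fun hh => hne' hh.symm) _
          have := hall _ (he ▸ List.getElem_mem (l := L.set j (L[j] ^^^ xr L)) (by simpa using hj'))
          omega
        simp only [mCond, if_neg hnall]
        exact hxr0
      · -- exactly one big heap (at j0)
        have hsm : ∀ k, ∀ hk : k < L.length, k ≠ j0 → L[k] ≤ 1 := by
          intro k hk hkj
          by_contra hbig
          exact h2 ⟨k, hk, hkj, by omega⟩
        have hall0 : ∀ c ∈ L.set j0 0, c ≤ 1 := by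
          intro c hc
          obtain ⟨k, hk, rfl⟩ := List.mem_iff_getElem.1 hc
          by_cases e : k = j0
          · subst e; simp
          · rw [List.getElem_set_ne (fun hh => e hh.symm)]
            exact hsm k (by simpa using hk) e
        have hrle : xr (L.set j0 0) ≤ 1 := xr_le_one hall0
        set r := xr (L.set j0 0) with hrdef
        have hr : r = xr L ^^^ L[j0] := by rw [hrdef, xr_set L j0 0 hj0, Nat.xor_zero]
        have hble : 1 ^^^ r ≤ 1 := by
          have : r = 0 ∨ r = 1 := by omega
          rcases this with h' | h' <;> simp [h']
        apply hmv j0 (1 ^^^ r) hj0 (by omega)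
        have hxr1 : xr (L.set j0 (1 ^^^ r)) = 1 := by
          rw [xr_set L j0 _ hj0, ← hr, Nat.xor_comm 1 r, Nat.xor_xor_cancel_left]
        have hall1 : ∀ c ∈ L.set j0 (1 ^^^ r), c ≤ 1 := by
          intro c hc
          obtain ⟨k, hk, rfl⟩ := List.mem_iff_getElem.1 hc
          by_cases e : k = j0
          · subst e; simpa using hble
          · rw [List.getElem_set_ne (fun hh => e hh.symm)]
            exact hsm k (by simpa using hk) e
        simp only [mCond, if_pos hall1]
        exact hxr1
    · intro hx0
      refine ⟨⟨L[j0], List.getElem_mem hj0, by omega⟩, ?_⟩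
      intro j b h hb hcond
      have hne0 : xr (L.set j b) ≠ 0 := by
        rw [xr_set L j b h, hx0, Nat.zero_xor]
        exact Nat.xor_ne_zero_iff.2 (by omega)
      by_cases hall : ∀ c ∈ L.set j b, c ≤ 1
      · have hj0j : j0 = j := by
          by_contra e
          have he : (L.set j b)[j0]'(by simpa using hj0) = L[j0] :=
            List.getElem_set_ne (fun hh => e hh.symm) _
          have := hall _ (he ▸ List.getElem_mem (l := L.set j b) (by simpa using hj0))
          omega
        subst hj0j
        have h01 : ∀ c ∈ L.set j0 0, c ≤ 1 := by
          intro c hc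
          obtain ⟨k, hk, rfl⟩ := List.mem_iff_getElem.1 hc
          by_cases e : k = j0
          · subst e; simp
          · rw [List.getElem_set_ne (fun hh => e hh.symm)]
            have he : (L.set j0 b)[k]'(by simpa using hk) = L[k]'(by simpa using hk) :=
              List.getElem_set_ne (fun hh => e hh.symm) _
            have := hall _ (he ▸ List.getElem_mem (l := L.set j0 b) (by simpa using hk))
            omega
        have := xr_le_one h01
        rw [xr_set L j0 0 hj0, hx0, Nat.zero_xor, Nat.xor_zero] at this
        omega
      · have : xr (L.set j b) = 0 := by simpa only [mCond, if_neg hall] using hcond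
        exact hne0 this

lemma misereP_nimHeapSum : ∀ (n : ℕ) (L : List ℕ), L.sum = n →
    (MisereP (nimHeapSum L) ↔ mCond L) := by
  intro n
  induction n using Nat.strong_induction_on with
  | _ n IH =>
    intro L hL
    rw [misereP_iff]
    have hmv : (∀ i, ¬ MisereP ((nimHeapSum L).moveLeft i)) ↔
        ∀ j b, ∀ h : j < L.length, b < L[j] → ¬ mCond (L.set j b) := by
      constructor
      · intro H j b h hb
        obtain ⟨i, hi⟩ := exists_moveLeft_nimHeapSum L j b h hb
        have := H i
        rwa [hi, IH _ (hL ▸ sum_set_lt h hb) _ rfl] at this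
      · intro H i
        obtain ⟨j, b, h, hb, he⟩ := moveLeft_nimHeapSum L i
        rw [he, IH _ (hL ▸ sum_set_lt h hb) _ rfl]
        exact H j b h hb
    rw [hmv, nonempty_leftMoves_nimHeapSum]
    exact combinatorial L

/-- **Misère Nim.** Let `G = *a₁ + ⋯ + *a_k`.  If some `aᵢ ≥ 2`, then `G` is a misère
P-position iff `a₁ ^^^ ⋯ ^^^ a_k = 0`.  If instead every `aᵢ` is `0` or `1`, then `G` is
a misère P-position iff `a₁ ^^^ ⋯ ^^^ a_k = 1`. -/
theorem misere_nim (L : List ℕ) :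
    ((∃ a ∈ L, 2 ≤ a) →
      (MisereP (nimHeapSum L) ↔ L.foldr (fun a r => a ^^^ r) 0 = 0)) ∧
    ((∀ a ∈ L, a = 0 ∨ a = 1) →
      (MisereP (nimHeapSum L) ↔ L.foldr (fun a r => a ^^^ r) 0 = 1)) := by
  have hm := misereP_nimHeapSum L.sum L rfl
  constructor
  · intro h2
    have hno : ¬ ∀ a ∈ L, a ≤ 1 := by
      obtain ⟨a, ha, h⟩ := h2
      intro hall
      exact absurd (hall a ha) (by omega)
    rw [hm]
    simp only [mCond, if_neg hno]
    exact Iff.rfl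
  · intro hle
    have hall : ∀ a ∈ L, a ≤ 1 := fun a ha => by rcases hle a ha with rfl | rfl <;> omega
    rw [hm]
    simp only [mCond, if_pos hall]
    exact Iff.rfl
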